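/- Let (ρ_0, …, ρ_{d−1}) be a generator cycle of pairwise distinct elements of P, with k_t = ℓ if ρ_t > ρ_{(t−1) mod d} and k_t = 1 otherwise, and let π be the induced ℓ-up-1-down price cycle of length c = Σ_{t=0}^{d−1} k_t. Then at every position of π lying in the block of k_t consecutive copies of ρ_t, the minimum of the ℓ cyclically preceding entries of π equals ρ_{(t−1) mod d}. Consequently, for every gain function g : P × P → ℝ, the objective value of π equals (Σ_{t=0}^{d−1} k_t · g(ρ_{(t−1) mod d}, ρ_t)) / (Σ_{t=0}^{d−1} k_t). -/

import Mathlib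

/-- Entry of a price cycle at (cyclic) position `t`. -/
noncomputable def cycEntry (L : List ℝ) (t : ℕ) : ℝ := L.getD (t % L.length) 0

/-- Reference at position `t`: minimum of the `ℓ` cyclically preceding entries. -/
noncomputable def cycRef (ℓ : ℕ) (hℓ : 0 < ℓ) (L : List ℝ) (t : ℕ) : ℝ :=
  (Finset.range ℓ).inf' (Finset.nonempty_range_iff.mpr hℓ.ne') fun j =>
    cycEntry L (t + L.length * ℓ - (j + 1))

/-- Objective value of a price cycle. -/
noncomputable def cycObj (g : ℝ → ℝ → ℝ) (ℓ : ℕ) (hℓ : 0 < ℓ) (L : List ℝ) : ℝ :=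
  (∑ t ∈ Finset.range L.length, g (cycRef ℓ hℓ L t) (cycEntry L t)) / L.length

def RefMonotone (P : Finset ℝ) (g : ℝ → ℝ → ℝ) : Prop :=
  ∀ p ∈ P, ∀ r ∈ P, ∀ r' ∈ P, r ≤ r' → g r p ≤ g r' p

noncomputable def genK (ℓ : ℕ) (R : List ℝ) (t : ℕ) : ℕ :=
  if R.getD ((t + R.length - 1) % R.length) 0 < R.getD t 0 then ℓ else 1

noncomputable def inducedCycle (ℓ : ℕ) (R : List ℝ) : List ℝ :=
  (List.range R.length).flatMap fun t => List.replicate (genK ℓ R t) (R.getD t 0)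

def IsResetPoint (ℓ : ℕ) (hℓ : 0 < ℓ) (L : List ℝ) (t : ℕ) : Prop :=
  cycEntry L t = (Finset.range ℓ).inf' (Finset.nonempty_range_iff.mpr hℓ.ne') fun j =>
    cycEntry L (t + L.length * ℓ - j)

namespace Stmt6Aux

lemma flatMap_range_length (F : ℕ → List ℝ) (n : ℕ) :
    ((List.range n).flatMap F).length = ∑ s ∈ Finset.range n, (F s).length := by
  induction n with
  | zero => simp
  | succ n ih =>
    rw [List.range_succ, List.flatMap_append, List.length_append, ih, Finset.sum_range_succ]
    simp

lemma flatMap_range_getD (F : ℕ → List ℝ) (n t i : ℕ) (ht : t < n)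
    (hi : i < (F t).length) :
    ((List.range n).flatMap F).getD ((∑ s ∈ Finset.range t, (F s).length) + i) 0
      = (F t).getD i 0 := by
  induction n with
  | zero => omega
  | succ n ih =>
    rw [List.range_succ, List.flatMap_append]
    rcases lt_or_eq_of_le (Nat.lt_succ_iff.mp ht) with h | h
    · rw [List.getD_append]
      · exact ih h
      · rw [flatMap_range_length]
        have h1 : ∑ s ∈ Finset.range (t+1), (F s).length ≤ ∑ s ∈ Finset.range n, (F s).length :=
          Finset.sum_le_sum_of_subset (Finset.range_subset_range.mpr h)
        rw [Finset.sum_range_succ] at h1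
        omega
    · subst h
      rw [List.getD_append_right _ _ _ _
        (by rw [flatMap_range_length]; exact Nat.le_add_right _ _)]
      rw [flatMap_range_length]
      simp

lemma sum_blocks (k : ℕ → ℕ) (f : ℕ → ℝ) (n : ℕ) :
    ∑ x ∈ Finset.range (∑ s ∈ Finset.range n, k s), f x
      = ∑ t ∈ Finset.range n, ∑ x ∈ Finset.Ico (∑ s ∈ Finset.range t, k s)
          (∑ s ∈ Finset.range (t+1), k s), f x := by
  induction n with
  | zero => simp
  | succ n ih =>
    have hle : (∑ s ∈ Finset.range n, k s) ≤ ∑ s ∈ Finset.range (n+1), k s :=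
      Finset.sum_le_sum_of_subset (Finset.range_subset_range.mpr (Nat.le_succ n))
    rw [Finset.sum_range_succ (fun t => ∑ x ∈ Finset.Ico _ _, f x), ← ih]
    simp only [Finset.range_eq_Ico] at hle ⊢
    exact (Finset.sum_Ico_consecutive f (Nat.zero_le _) hle).symm

/-! main setup -/

noncomputable def rho (R : List ℝ) (t : ℕ) : ℝ := R.getD (t % R.length) 0

noncomputable def kf (ℓ : ℕ) (R : List ℝ) (t : ℕ) : ℕ := genK ℓ R (t % R.length)

noncomputable def Bp (ℓ : ℕ) (R : List ℝ) (t : ℕ) : ℕ := ∑ s ∈ Finset.range t, kf ℓ R s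

variable {ℓ : ℕ} {R : List ℝ}

lemma kf_pos (hℓ : 0 < ℓ) (t : ℕ) : 0 < kf ℓ R t := by
  unfold kf genK; split <;> omega

lemma kf_le (hℓ : 0 < ℓ) (t : ℕ) : kf ℓ R t ≤ ℓ := by
  unfold kf genK; split <;> omega

lemma rho_period (t : ℕ) : rho R (t + R.length) = rho R t := by
  unfold rho; rw [Nat.add_mod_right]

lemma kf_period (t : ℕ) : kf ℓ R (t + R.length) = kf ℓ R t := by
  unfold kf; rw [Nat.add_mod_right]

lemma mod_shift (hR : 0 < R.length) (t : ℕ) :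
    (t + R.length - 1) % R.length = (t % R.length + R.length - 1) % R.length := by
  have h := Nat.div_add_mod t R.length
  have : t + R.length - 1 = (t % R.length + R.length - 1) + R.length * (t / R.length) := by
    omega
  rw [this, Nat.add_mul_mod_self_left]

lemma rho_prev (hR : 0 < R.length) (t : ℕ) :
    rho R (t + R.length - 1) = R.getD ((t % R.length + R.length - 1) % R.length) 0 := by
  unfold rho; rw [mod_shift hR]

lemma kf_up (hℓ : 0 < ℓ) (hR : 0 < R.length) (t : ℕ) (h : 1 < kf ℓ R t) :
    rho R (t + R.length - 1) < rho R t := by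
  rw [rho_prev hR t]
  unfold kf genK at h
  show _ < R.getD (t % R.length) 0
  split at h
  · assumption
  · omega

lemma kf_down (hℓ : 0 < ℓ) (hR : 0 < R.length) (t m : ℕ) (h1 : kf ℓ R t ≤ m) (h2 : m < ℓ) :
    kf ℓ R t = 1 ∧ rho R t ≤ rho R (t + R.length - 1) := by
  unfold kf genK at h1 ⊢
  split at h1
  · omega
  · next hc =>
    refine ⟨by rw [if_neg hc], ?_⟩
    rw [rho_prev hR t]
    exact le_of_not_gt hc

lemma getD_replicate' (n i : ℕ) (a : ℝ) (h : i < n) : (List.replicate n a).getD i 0 = a := by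
  rw [List.getD_eq_getElem _ _ (by simpa using h)]
  simp


lemma Bp_succ (t : ℕ) : Bp ℓ R (t + 1) = Bp ℓ R t + kf ℓ R t := Finset.sum_range_succ _ _

lemma Bp_mono {s t : ℕ} (h : s ≤ t) : Bp ℓ R s ≤ Bp ℓ R t :=
  Finset.sum_le_sum_of_subset (Finset.range_subset_range.mpr h)

lemma Bp_add_period (t : ℕ) : Bp ℓ R (t + R.length) = Bp ℓ R t + Bp ℓ R R.length := by
  induction t with
  | zero => simp [Bp]
  | succ t ih =>
    have h : t + 1 + R.length = (t + R.length) + 1 := by omega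
    rw [h, Bp_succ, ih, kf_period, Bp_succ]
    ring

lemma Bp_rep (q r : ℕ) : Bp ℓ R (r + R.length * q) = Bp ℓ R r + q * Bp ℓ R R.length := by
  induction q with
  | zero => simp
  | succ q ih =>
    have h : r + R.length * (q + 1) = (r + R.length * q) + R.length := by ring
    rw [h, Bp_add_period, ih]
    ring

lemma len_eq (hℓ : 0 < ℓ) : (inducedCycle ℓ R).length = Bp ℓ R R.length := by
  unfold inducedCycle Bp
  rw [flatMap_range_length]
  refine Finset.sum_congr rfl fun s hs => ?_
  rw [Finset.mem_range] at hs
  simp [kf, Nat.mod_eq_of_lt hs]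

lemma c_pos (hℓ : 0 < ℓ) (hR : 0 < R.length) : 0 < Bp ℓ R R.length := by
  calc 0 < kf ℓ R 0 := kf_pos hℓ 0
  _ = Bp ℓ R 1 := by simp [Bp_succ, Bp]
  _ ≤ Bp ℓ R R.length := Bp_mono hR

lemma entry_period (L : List ℝ) (x : ℕ) : cycEntry L (x + L.length) = cycEntry L x := by
  simp [cycEntry, Nat.add_mod_right]

lemma entry_lemma (hℓ : 0 < ℓ) (hR : 0 < R.length) (t i : ℕ) (hi : i < kf ℓ R t) :
    cycEntry (inducedCycle ℓ R) (Bp ℓ R t + i) = rho R t := by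
  have hrd : t % R.length < R.length := Nat.mod_lt _ hR
  have hmm : t % R.length % R.length = t % R.length := Nat.mod_eq_of_lt hrd
  have hkfr : kf ℓ R (t % R.length) = kf ℓ R t := by unfold kf; rw [hmm]
  have hgen : genK ℓ R (t % R.length) = kf ℓ R t := by rw [← hkfr]; unfold kf; rw [hmm]
  have hBrep := Bp_rep (ℓ := ℓ) (R := R) (t / R.length) (t % R.length)
  have ht' : t = t % R.length + R.length * (t / R.length) := by
    have := Nat.div_add_mod t R.length; omega
  have hlt : Bp ℓ R (t % R.length) + i < Bp ℓ R R.length := by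
    have h1 : Bp ℓ R (t % R.length) + kf ℓ R (t % R.length)
        = Bp ℓ R (t % R.length + 1) := (Bp_succ _).symm
    have h2 : Bp ℓ R (t % R.length + 1) ≤ Bp ℓ R R.length := Bp_mono hrd
    omega
  have hlen := len_eq (ℓ := ℓ) (R := R) hℓ
  have hmodpos : (Bp ℓ R t + i) % (inducedCycle ℓ R).length
      = Bp ℓ R (t % R.length) + i := by
    rw [hlen]
    conv_lhs => rw [ht']
    rw [hBrep]
    have h3 : Bp ℓ R (t % R.length) + (t / R.length) * Bp ℓ R R.length + i
        = Bp ℓ R (t % R.length) + i + (t / R.length) * Bp ℓ R R.length := by ring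
    rw [h3, Nat.add_mul_mod_self_right, Nat.mod_eq_of_lt hlt]
  unfold cycEntry
  rw [hmodpos]
  unfold inducedCycle
  have hBr : Bp ℓ R (t % R.length)
      = ∑ s ∈ Finset.range (t % R.length),
          (List.replicate (genK ℓ R s) (R.getD s 0)).length := by
    unfold Bp
    refine Finset.sum_congr rfl fun s hs => ?_
    rw [Finset.mem_range] at hs
    simp [kf, Nat.mod_eq_of_lt (lt_trans hs hrd)]
  rw [hBr, flatMap_range_getD _ _ _ _ hrd (by simpa [hgen] using hi)]
  rw [getD_replicate' _ _ _ (by rwa [hgen])]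
  rfl


lemma entry_periodN (L : List ℝ) (x n : ℕ) : cycEntry L (x + L.length * n) = cycEntry L x := by
  simp [cycEntry, Nat.add_mul_mod_self_left]

lemma kf_eq_genK (hR : 0 < R.length) {t : ℕ} (htd : t < R.length) :
    kf ℓ R t = genK ℓ R t := by
  unfold kf; rw [Nat.mod_eq_of_lt htd]

lemma M0 (hℓ : 0 < ℓ) (hR : 0 < R.length) (t m : ℕ) (hm : m < kf ℓ R t) :
    cycEntry (inducedCycle ℓ R) (Bp ℓ R (t+1) + (inducedCycle ℓ R).length * ℓ - 1 - m)
      = rho R t := by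
  have hlen := len_eq (ℓ := ℓ) (R := R) hℓ
  have hc1 : 0 < (inducedCycle ℓ R).length * ℓ :=
    Nat.mul_pos (hlen ▸ c_pos hℓ hR) hℓ
  have hbs := Bp_succ (ℓ := ℓ) (R := R) t
  have heq : Bp ℓ R (t+1) + (inducedCycle ℓ R).length * ℓ - 1 - m
      = (Bp ℓ R t + (kf ℓ R t - 1 - m)) + (inducedCycle ℓ R).length * ℓ := by omega
  rw [heq, entry_periodN, entry_lemma hℓ hR t _ (by omega)]

lemma refGe (hℓ : 0 < ℓ) (hR : 0 < R.length) :
    ∀ m, m < ℓ → ∀ t, rho R t ≤ cycEntry (inducedCycle ℓ R)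
      (Bp ℓ R (t+1) + (inducedCycle ℓ R).length * ℓ - 1 - m) := by
  intro m
  induction m using Nat.strong_induction_on with
  | _ m ih =>
    intro hm t
    by_cases hcase : m < kf ℓ R t
    · exact le_of_eq (M0 hℓ hR t m hcase).symm
    · push_neg at hcase
      obtain ⟨hk1, hle⟩ := kf_down hℓ hR t m hcase hm
      have hm1 : 1 ≤ m := by omega
      have hIH := ih (m-1) (by omega) (by omega) (t + R.length - 1)
      have ht1 : t + R.length - 1 + 1 = t + R.length := by omega
      rw [ht1, Bp_add_period] at hIH
      have hlen := len_eq (ℓ := ℓ) (R := R) hℓ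
      have hc1 : ℓ ≤ (inducedCycle ℓ R).length * ℓ :=
        Nat.le_mul_of_pos_left ℓ (hlen ▸ c_pos hℓ hR)
      have hbs := Bp_succ (ℓ := ℓ) (R := R) t
      have hpos : Bp ℓ R t + Bp ℓ R R.length + (inducedCycle ℓ R).length * ℓ - 1 - (m-1)
          = (Bp ℓ R (t+1) + (inducedCycle ℓ R).length * ℓ - 1 - m)
            + (inducedCycle ℓ R).length := by omega
      rw [hpos, entry_period] at hIH
      exact le_trans hle hIH

lemma ref_eq (hℓ : 0 < ℓ) (hR : 0 < R.length) (t a : ℕ) (ha : a < kf ℓ R t) :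
    cycRef ℓ hℓ (inducedCycle ℓ R) (Bp ℓ R t + a) = rho R (t + R.length - 1) := by
  have hlen := len_eq (ℓ := ℓ) (R := R) hℓ
  have hcp : 0 < (inducedCycle ℓ R).length := hlen ▸ c_pos hℓ hR
  have hc1 : ℓ ≤ (inducedCycle ℓ R).length * ℓ := Nat.le_mul_of_pos_left ℓ hcp
  have ht1 : t + R.length - 1 + 1 = t + R.length := by omega
  unfold cycRef
  apply le_antisymm
  · have hmem : a ∈ Finset.range ℓ := Finset.mem_range.mpr (lt_of_lt_of_le ha (kf_le hℓ t))
    refine le_trans (Finset.inf'_le _ hmem) (le_of_eq ?_)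
    have h0 := M0 hℓ hR (t + R.length - 1) 0 (kf_pos hℓ _)
    rw [ht1, Bp_add_period] at h0
    have hpos : Bp ℓ R t + a + (inducedCycle ℓ R).length * ℓ - (a+1)
          + (inducedCycle ℓ R).length
        = Bp ℓ R t + Bp ℓ R R.length + (inducedCycle ℓ R).length * ℓ - 1 - 0 := by omega
    rw [← entry_period, hpos, h0]
  · refine Finset.le_inf' _ _ fun j hj => ?_
    rw [Finset.mem_range] at hj
    rcases lt_or_ge j a with hja | haj
    · have hup := kf_up hℓ hR t (by omega)
      have hpos : Bp ℓ R t + a + (inducedCycle ℓ R).length * ℓ - (j+1)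
          = (Bp ℓ R t + (a - 1 - j)) + (inducedCycle ℓ R).length * ℓ := by omega
      rw [hpos, entry_periodN, entry_lemma hℓ hR t _ (by omega)]
      exact le_of_lt hup
    · have hM := refGe hℓ hR (j - a) (by omega) (t + R.length - 1)
      rw [ht1, Bp_add_period] at hM
      have hpos : Bp ℓ R t + Bp ℓ R R.length + (inducedCycle ℓ R).length * ℓ - 1 - (j - a)
          = (Bp ℓ R t + a + (inducedCycle ℓ R).length * ℓ - (j+1))
            + (inducedCycle ℓ R).length := by omega
      rw [hpos, entry_period] at hM
      exact hM

lemma block_sum (hℓ : 0 < ℓ) (hR : 0 < R.length) (g : ℝ → ℝ → ℝ) (t : ℕ) :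
    ∑ x ∈ Finset.Ico (Bp ℓ R t) (Bp ℓ R (t+1)),
      g (cycRef ℓ hℓ (inducedCycle ℓ R) x) (cycEntry (inducedCycle ℓ R) x)
    = (kf ℓ R t : ℝ) * g (rho R (t + R.length - 1)) (rho R t) := by
  have hbs := Bp_succ (ℓ := ℓ) (R := R) t
  have hconst : ∀ x ∈ Finset.Ico (Bp ℓ R t) (Bp ℓ R (t+1)),
      g (cycRef ℓ hℓ (inducedCycle ℓ R) x) (cycEntry (inducedCycle ℓ R) x)
        = g (rho R (t + R.length - 1)) (rho R t) := by
    intro x hx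
    rw [Finset.mem_Ico] at hx
    have ha : x - Bp ℓ R t < kf ℓ R t := by omega
    rw [show x = Bp ℓ R t + (x - Bp ℓ R t) from by omega,
      entry_lemma hℓ hR t _ ha, ref_eq hℓ hR t _ ha]
  rw [Finset.sum_congr rfl hconst, Finset.sum_const, Nat.card_Ico, hbs,
    Nat.add_sub_cancel_left, nsmul_eq_mul]

end Stmt6Aux

/-- along the ℓ-up-1-down price cycle induced by a generator cycle
of distinct prices, the reference at every position of the `t`-th block equals
`ρ_{(t−1) mod d}`; consequently the objective value is the `k`-weighted average
of `g(ρ_{(t−1) mod d}, ρ_t)`. -/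
theorem stmt6 (P : Finset ℝ) (hP : P.Nonempty) (ℓ : ℕ) (hℓ : 0 < ℓ)
    (R : List ℝ) (hR : R ≠ []) (hnd : R.Nodup) (hRP : ∀ x ∈ R, x ∈ P) :
    (∀ t < R.length, ∀ pos : ℕ,
      (∑ s ∈ Finset.range t, genK ℓ R s) ≤ pos →
      pos < ∑ s ∈ Finset.range (t + 1), genK ℓ R s →
      cycRef ℓ hℓ (inducedCycle ℓ R) pos =
        R.getD ((t + R.length - 1) % R.length) 0) ∧
    ∀ g : ℝ → ℝ → ℝ,
      cycObj g ℓ hℓ (inducedCycle ℓ R) =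
        (∑ t ∈ Finset.range R.length,
            (genK ℓ R t : ℝ) *
              g (R.getD ((t + R.length - 1) % R.length) 0) (R.getD t 0)) /
          (∑ t ∈ Finset.range R.length, (genK ℓ R t : ℝ)) := by
  open Stmt6Aux in
  have hRpos : 0 < R.length := List.length_pos_iff.mpr hR
  have hBgen : ∀ u ≤ R.length, Bp ℓ R u = ∑ s ∈ Finset.range u, genK ℓ R s := by
    intro u hu
    exact Finset.sum_congr rfl fun s hs => by
      rw [Finset.mem_range] at hs
      exact kf_eq_genK hRpos (by omega)
  constructor
  · intro t ht pos h1 h2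
    rw [← hBgen t (by omega)] at h1
    rw [← hBgen (t+1) (by omega), Bp_succ, kf_eq_genK hRpos ht] at h2
    rw [← kf_eq_genK hRpos ht] at h2
    have ha : pos - Bp ℓ R t < kf ℓ R t := by omega
    have hre := Stmt6Aux.ref_eq hℓ hRpos t (pos - Bp ℓ R t) ha
    rw [show Bp ℓ R t + (pos - Bp ℓ R t) = pos from by omega] at hre
    exact hre
  · intro g
    unfold cycObj
    have hlen := Stmt6Aux.len_eq (ℓ := ℓ) (R := R) hℓ
    have hpart : ∑ x ∈ Finset.range (Bp ℓ R R.length),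
        g (cycRef ℓ hℓ (inducedCycle ℓ R) x) (cycEntry (inducedCycle ℓ R) x)
        = ∑ t ∈ Finset.range R.length, ∑ x ∈ Finset.Ico (Bp ℓ R t) (Bp ℓ R (t+1)),
            g (cycRef ℓ hℓ (inducedCycle ℓ R) x) (cycEntry (inducedCycle ℓ R) x) :=
      Stmt6Aux.sum_blocks (kf ℓ R)
        (fun x => g (cycRef ℓ hℓ (inducedCycle ℓ R) x) (cycEntry (inducedCycle ℓ R) x))
        R.length
    rw [hlen, hpart]
    have hnum : ∑ t ∈ Finset.range R.length, ∑ x ∈ Finset.Ico (Bp ℓ R t) (Bp ℓ R (t+1)),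
        g (cycRef ℓ hℓ (inducedCycle ℓ R) x) (cycEntry (inducedCycle ℓ R) x)
        = ∑ t ∈ Finset.range R.length,
            (genK ℓ R t : ℝ) * g (R.getD ((t + R.length - 1) % R.length) 0) (R.getD t 0) := by
      refine Finset.sum_congr rfl fun t ht => ?_
      rw [Finset.mem_range] at ht
      rw [Stmt6Aux.block_sum hℓ hRpos g t, kf_eq_genK hRpos ht]
      congr 2
      unfold Stmt6Aux.rho
      rw [Nat.mod_eq_of_lt ht]
    have hden : ((Bp ℓ R R.length : ℕ) : ℝ) = ∑ t ∈ Finset.range R.length, (genK ℓ R t : ℝ) := by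
      unfold Stmt6Aux.Bp
      push_cast
      exact Finset.sum_congr rfl fun t ht => by
        rw [Finset.mem_range] at ht
        rw [kf_eq_genK hRpos ht]
    rw [hnum, hden]
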